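/- Let μ be a probability measure on ℝ² with continuous marginal cumulative distribution functions F_X and F_Y and support S. If the two-dimensional Lebesgue measure of S is positive, λ₂(S) > 0, then there do not exist functions f : ℝ → ℝ and g : ℝ → ℝ and a constant c such that F_X(x)·F_Y(y) − f(x) − g(y) = c for all (x,y) ∈ S. -/

import Mathlib

open MeasureTheory Set
open scoped ENNReal

lemma aux_three {P : Set ℝ} (h : volume P ≠ 0) :
    ∃ u ∈ P, ∃ v ∈ P, ∃ w ∈ P, u < v ∧ v < w := by
  obtain ⟨a, ha⟩ := nonempty_of_measure_ne_zero h
  have h2 : volume (P \ {a}) ≠ 0 := by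
    rwa [measure_diff_null (measure_singleton a)]
  obtain ⟨b, hb⟩ := nonempty_of_measure_ne_zero h2
  have h3 : volume ((P \ {a}) \ {b}) ≠ 0 := by
    rwa [measure_diff_null (measure_singleton b), measure_diff_null (measure_singleton a)]
  obtain ⟨c, hc⟩ := nonempty_of_measure_ne_zero h3
  have hb' : b ∈ P := hb.1
  have hc' : c ∈ P := hc.1.1
  have hba : b ≠ a := hb.2
  have hca : c ≠ a := hc.1.2
  have hcb : c ≠ b := hc.2
  rcases lt_trichotomy a b with h1 | h1 | h1
  · rcases lt_trichotomy b c with hk | hk | hk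
    · exact ⟨a, ha, b, hb', c, hc', h1, hk⟩
    · exact absurd hk.symm hcb
    · rcases lt_trichotomy a c with h4 | h4 | h4
      · exact ⟨a, ha, c, hc', b, hb', h4, hk⟩
      · exact absurd h4.symm hca
      · exact ⟨c, hc', a, ha, b, hb', h4, h1⟩
  · exact absurd h1.symm hba
  · rcases lt_trichotomy a c with hk | hk | hk
    · exact ⟨b, hb', a, ha, c, hc', h1, hk⟩
    · exact absurd hk.symm hca
    · rcases lt_trichotomy b c with h4 | h4 | h4
      · exact ⟨b, hb', c, hc', a, ha, h4, hk⟩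
      · exact absurd h4.symm hcb
      · exact ⟨c, hc', b, hb', a, ha, h4, h1⟩

lemma aux_ball {S : Set (ℝ × ℝ)} (hS : MeasurableSet S) (hpos : volume S ≠ 0) :
    ∃ (z w r : ℝ), 0 < r ∧
      volume ((Metric.closedBall z r ×ˢ Metric.closedBall w r) \ S)
        ≤ ENNReal.ofReal (r ^ 2 / 25) := by
  have hae := Besicovitch.ae_tendsto_measure_inter_div (volume : Measure (ℝ × ℝ)) S
  have hne : (volume : Measure (ℝ × ℝ)).restrict S ≠ 0 := by
    intro h0
    rw [← Measure.restrict_apply_univ S] at hpos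
    simp [h0] at hpos
  have : (ae (volume.restrict S)).NeBot := ae_neBot.2 hne
  obtain ⟨p, hp⟩ := hae.exists
  have hev : ∀ᶠ r in nhdsWithin (0:ℝ) (Ioi 0),
      (99/100 : ℝ≥0∞) < volume (S ∩ Metric.closedBall p r) / volume (Metric.closedBall p r) :=
    hp.eventually_const_lt
      (by rw [ENNReal.div_lt_iff (by norm_num) (by norm_num)]; norm_num)
  obtain ⟨r, hrpos, hr⟩ := (eventually_mem_nhdsWithin.and hev).exists
  rw [mem_Ioi] at hrpos
  refine ⟨p.1, p.2, r, hrpos, ?_⟩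
  rw [closedBall_prod_same]
  set B := Metric.closedBall p r with hB
  have hBvol : volume B = ENNReal.ofReal (4 * r ^ 2) := by
    rw [hB, ← closedBall_prod_same, Measure.volume_eq_prod, Measure.prod_prod,
      Real.volume_closedBall, Real.volume_closedBall, ← ENNReal.ofReal_mul (by linarith)]
    ring_nf
  have hb0 : volume B ≠ 0 := by
    rw [hBvol]
    simp only [ne_eq, ENNReal.ofReal_eq_zero, not_le]
    positivity
  have hbt : volume B ≠ ⊤ := by rw [hBvol]; exact ENNReal.ofReal_ne_top
  have hle : (99 / 100 : ℝ≥0∞) * volume B ≤ volume (S ∩ B) := by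
    rw [ENNReal.lt_div_iff_mul_lt (Or.inl hb0) (Or.inl hbt)] at hr
    exact hr.le
  have hdiff : volume (B \ S) = volume B - volume (S ∩ B) := by
    rw [← diff_inter_self_eq_diff]
    exact measure_diff inter_subset_right (hS.inter measurableSet_closedBall).nullMeasurableSet
      (ne_top_of_le_ne_top hbt (measure_mono inter_subset_right))
  rw [hdiff]
  calc volume B - volume (S ∩ B) ≤ volume B - 99 / 100 * volume B :=
        tsub_le_tsub_left hle _
    _ = ENNReal.ofReal (r ^ 2 / 25) := by
        rw [hBvol]
        rw [show (99 / 100 : ℝ≥0∞) = ENNReal.ofReal (99 / 100) by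
          rw [ENNReal.ofReal_div_of_pos (by norm_num)]; norm_num]
        rw [← ENNReal.ofReal_mul (by norm_num), ← ENNReal.ofReal_sub _ (by positivity)]
        ring_nf

theorem stmt_16
    (μ : Measure (ℝ × ℝ)) [IsProbabilityMeasure μ]
    (FX FY : ℝ → ℝ)
    (hFX : ∀ x, FX x = (μ (Iic x ×ˢ (univ : Set ℝ))).toReal)
    (hFY : ∀ y, FY y = (μ ((univ : Set ℝ) ×ˢ Iic y)).toReal)
    (hFXcont : Continuous FX) (hFYcont : Continuous FY)
    (S : Set (ℝ × ℝ))
    (hSclosed : IsClosed S) (hSfull : μ Sᶜ = 0)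
    (hSmin : ∀ T : Set (ℝ × ℝ), IsClosed T → μ Tᶜ = 0 → S ⊆ T)
    (hSvol : 0 < volume S) :
    ¬ ∃ (f g : ℝ → ℝ) (c : ℝ), ∀ p ∈ S, FX p.1 * FY p.2 - f p.1 - g p.2 = c := by
  rintro ⟨f, g, c, h⟩
  have hsupp : ∀ p ∈ S, ∀ U : Set (ℝ × ℝ), IsOpen U → p ∈ U → μ U ≠ 0 := by
    intro p hp U hU hpU h0
    exact hSmin Uᶜ hU.isClosed_compl (by rwa [compl_compl]) hp hpU
  have hgoodX : ∀ p ∈ S, ∀ a b : ℝ, a < p.1 → p.1 < b → FX a < FX b := by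
    intro p hp a b hap hpb
    have hopen : μ (Ioo a b ×ˢ (univ : Set ℝ)) ≠ 0 :=
      hsupp p hp _ (isOpen_Ioo.prod isOpen_univ) (Set.mem_prod.2 ⟨⟨hap, hpb⟩, trivial⟩)
    have hsplit : μ (Iic b ×ˢ (univ : Set ℝ)) =
        μ (Iic a ×ˢ (univ : Set ℝ)) + μ (Ioc a b ×ˢ (univ : Set ℝ)) := by
      rw [← Iic_union_Ioc_eq_Iic (le_of_lt (hap.trans hpb)), union_prod]
      exact measure_union (Set.disjoint_prod.2 (Or.inl (Iic_disjoint_Ioc le_rfl)))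
        (measurableSet_Ioc.prod MeasurableSet.univ)
    have hFb : FX b = FX a + (μ (Ioc a b ×ˢ (univ : Set ℝ))).toReal := by
      rw [hFX, hFX, hsplit, ENNReal.toReal_add (measure_ne_top μ _) (measure_ne_top μ _)]
    have hpos : 0 < (μ (Ioc a b ×ˢ (univ : Set ℝ))).toReal := by
      refine ENNReal.toReal_pos (fun h0 => hopen ?_) (measure_ne_top μ _)
      exact measure_mono_null (prod_mono_left Ioo_subset_Ioc_self) h0
    linarith
  have hgoodY : ∀ p ∈ S, ∀ a b : ℝ, a < p.2 → p.2 < b → FY a < FY b := by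
    intro p hp a b hap hpb
    have hopen : μ ((univ : Set ℝ) ×ˢ Ioo a b) ≠ 0 :=
      hsupp p hp _ (isOpen_univ.prod isOpen_Ioo) (Set.mem_prod.2 ⟨trivial, ⟨hap, hpb⟩⟩)
    have hsplit : μ ((univ : Set ℝ) ×ˢ Iic b) =
        μ ((univ : Set ℝ) ×ˢ Iic a) + μ ((univ : Set ℝ) ×ˢ Ioc a b) := by
      rw [← Iic_union_Ioc_eq_Iic (le_of_lt (hap.trans hpb)), prod_union]
      exact measure_union (Set.disjoint_prod.2 (Or.inr (Iic_disjoint_Ioc le_rfl)))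
        (MeasurableSet.univ.prod measurableSet_Ioc)
    have hFb : FY b = FY a + (μ ((univ : Set ℝ) ×ˢ Ioc a b)).toReal := by
      rw [hFY, hFY, hsplit, ENNReal.toReal_add (measure_ne_top μ _) (measure_ne_top μ _)]
    have hpos : 0 < (μ ((univ : Set ℝ) ×ˢ Ioc a b)).toReal := by
      refine ENNReal.toReal_pos (fun h0 => hopen ?_) (measure_ne_top μ _)
      exact measure_mono_null (prod_mono_right Ioo_subset_Ioc_self) h0
    linarith
  -- grid construction
  have hSmeas : MeasurableSet S := hSclosed.measurableSet
  obtain ⟨z, w, r, hr, hball⟩ := aux_ball hSmeas hSvol.ne'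
  set I := Metric.closedBall z r with hI
  set J := Metric.closedBall w r with hJ
  have hIvol : volume I = ENNReal.ofReal (2 * r) := Real.volume_closedBall z r
  have hJvol : volume J = ENNReal.ofReal (2 * r) := Real.volume_closedBall w r
  set Q := I ×ˢ J \ S with hQ
  have hQmeas : MeasurableSet Q :=
    (measurableSet_closedBall.prod measurableSet_closedBall).diff hSmeas
  set fib : ℝ → ℝ≥0∞ := fun x => volume (Prod.mk x ⁻¹' Q) with hfibdef
  have hQvol : ∫⁻ x, fib x = volume Q := by
    rw [Measure.volume_eq_prod, Measure.prod_apply hQmeas]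
  set Bad := {x : ℝ | ENNReal.ofReal (r / 2) ≤ fib x} with hBadDef
  have hmarkov := mul_meas_ge_le_lintegral (μ := (volume : Measure ℝ))
    (measurable_measure_prodMk_left (ν := (volume : Measure ℝ)) hQmeas) (ENNReal.ofReal (r / 2))
  rw [hQvol] at hmarkov
  have hτ0 : ENNReal.ofReal (r / 2) ≠ 0 := ne_of_gt (ENNReal.ofReal_pos.2 (by positivity))
  have hBadVol : volume Bad ≤ ENNReal.ofReal (2 * r / 25) := by
    have h1 : ENNReal.ofReal (r / 2) * volume Bad ≤ ENNReal.ofReal (r ^ 2 / 25) :=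
      hmarkov.trans hball
    have h2 : volume Bad ≤ ENNReal.ofReal (r ^ 2 / 25) / ENNReal.ofReal (r / 2) := by
      rw [ENNReal.le_div_iff_mul_le (Or.inl hτ0) (Or.inl ENNReal.ofReal_ne_top), mul_comm]
      exact h1
    refine h2.trans_eq ?_
    rw [← ENNReal.ofReal_div_of_pos (by positivity)]
    congr 1
    field_simp
  have hGoodVol : volume (I \ Bad) ≠ 0 := by
    intro h0
    have h1 : volume I ≤ volume (I \ Bad) + volume Bad :=
      (measure_mono (subset_diff_union I Bad)).trans (measure_union_le _ _)
    rw [h0, zero_add, hIvol] at h1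
    have h2 : (2 : ℝ) * r ≤ 2 * r / 25 :=
      (ENNReal.ofReal_le_ofReal_iff (by positivity)).1 (h1.trans hBadVol)
    linarith
  obtain ⟨x1, hx1, x0, hx0, x2, hx2, hxo1, hxo2⟩ := aux_three hGoodVol
  have hfibmem : ∀ x ∈ I \ Bad, volume (J \ {y | (x, y) ∈ S}) ≤ ENNReal.ofReal (r / 2) := by
    rintro x ⟨hxI, hxB⟩
    have hsub : J \ {y | (x, y) ∈ S} ⊆ Prod.mk x ⁻¹' Q := by
      rintro y ⟨hyJ, hyS⟩
      exact ⟨⟨hxI, hyJ⟩, hyS⟩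
    exact (measure_mono hsub).trans (le_of_not_ge hxB)
  set K := (J \ {y | (x1, y) ∈ S}) ∪ (J \ {y | (x0, y) ∈ S}) ∪ (J \ {y | (x2, y) ∈ S}) with hK
  have hKVol : volume (J \ K) ≠ 0 := by
    intro h0
    have h1 : volume J ≤ volume (J \ K) + volume K :=
      (measure_mono (subset_diff_union J K)).trans (measure_union_le _ _)
    have h2 : volume K ≤ ENNReal.ofReal (r / 2) + ENNReal.ofReal (r / 2)
        + ENNReal.ofReal (r / 2) := by
      refine (measure_union_le _ _).trans (add_le_add ((measure_union_le _ _).trans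
        (add_le_add ?_ ?_)) ?_)
      · exact hfibmem x1 hx1
      · exact hfibmem x0 hx0
      · exact hfibmem x2 hx2
    rw [h0, zero_add, hJvol] at h1
    have h3 := h1.trans h2
    rw [← ENNReal.ofReal_add (by positivity) (by positivity),
      ← ENNReal.ofReal_add (by positivity) (by positivity)] at h3
    have h4 : (2 : ℝ) * r ≤ r / 2 + r / 2 + r / 2 :=
      (ENNReal.ofReal_le_ofReal_iff (by positivity)).1 h3
    linarith
  obtain ⟨y1, hy1, y0, hy0, y2, hy2, hyo1, hyo2⟩ := aux_three hKVol
  have hmemS : ∀ x, x = x1 ∨ x = x0 ∨ x = x2 → ∀ y ∈ J \ K, (x, y) ∈ S := by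
    rintro x hx y ⟨hyJ, hyK⟩
    simp only [hK, mem_union, not_or] at hyK
    rcases hx with rfl | rfl | rfl
    · by_contra hnS; exact hyK.1.1 ⟨hyJ, hnS⟩
    · by_contra hnS; exact hyK.1.2 ⟨hyJ, hnS⟩
    · by_contra hnS; exact hyK.2 ⟨hyJ, hnS⟩
  have hp00 : (x0, y0) ∈ S := hmemS x0 (Or.inr (Or.inl rfl)) y0 hy0
  have hp11 : (x1, y1) ∈ S := hmemS x1 (Or.inl rfl) y1 hy1
  have hp12 : (x1, y2) ∈ S := hmemS x1 (Or.inl rfl) y2 hy2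
  have hp21 : (x2, y1) ∈ S := hmemS x2 (Or.inr (Or.inr rfl)) y1 hy1
  have hp22 : (x2, y2) ∈ S := hmemS x2 (Or.inr (Or.inr rfl)) y2 hy2
  have hxlt : FX x1 < FX x2 := hgoodX (x0, y0) hp00 x1 x2 hxo1 hxo2
  have hylt : FY y1 < FY y2 := hgoodY (x0, y0) hp00 y1 y2 hyo1 hyo2
  have e11 := h (x1, y1) hp11
  have e12 := h (x1, y2) hp12
  have e21 := h (x2, y1) hp21
  have e22 := h (x2, y2) hp22
  simp only at e11 e12 e21 e22
  nlinarith [mul_pos (sub_pos.2 hxlt) (sub_pos.2 hylt), e11, e12, e21, e22]
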